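/- Let θ, A > 0 and N a positive integer. Define q^{(N)}_{A,θ}(k) := A^{↑k} · sum over weakly increasing sequences 1 <= i_1 <= ... <= i_k <= N of (θ^{↑m_1} θ^{↑m_2} ···)/(m_1! m_2! ···), where m_l is the number of indices r with i_r = l, and g^{↑k} = g(g+1)···(g+k-1). Then for every real y > Nθ + A, the series F^{(N)}_{A,θ}(y) := sum_{k>=0} q^{(N)}_{A,θ}(k) / y^{↑k} converges and equals Γ(y - A - Nθ)Γ(y) / (Γ(y - A)Γ(y - Nθ)). -/

import Mathlib

/-- The rising factorial `g^{↑k} = g(g+1)⋯(g+k-1)`, with `g^{↑0} = 1`. -/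
noncomputable def risingFactorial (g : ℝ) (k : ℕ) : ℝ :=
  ∏ i ∈ Finset.range k, (g + i)

/-- `q^{(N)}_{A,θ}(k) = A^{↑k} · ∑_{1 ≤ i₁ ≤ ⋯ ≤ i_k ≤ N} (θ^{↑m₁} θ^{↑m₂} ⋯)/(m₁! m₂! ⋯)`,
where `m_l` is the multiplicity of `l` among `i₁,…,i_k`.  A weakly increasing
sequence is encoded by its tuple of multiplicities `(m₁,…,m_N)` with `∑ m_l = k`. -/
noncomputable def qCoef (A θ : ℝ) (N k : ℕ) : ℝ :=
  risingFactorial A k *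
    ∑ m ∈ Finset.Nat.antidiagonalTuple N k,
      ∏ l : Fin N, risingFactorial θ (m l) / (Nat.factorial (m l) : ℝ)

lemma rf_zero (g : ℝ) : risingFactorial g 0 = 1 := by simp [risingFactorial]

lemma rf_succ (g : ℝ) (k : ℕ) :
    risingFactorial g (k + 1) = risingFactorial g k * (g + k) := by
  simp [risingFactorial, Finset.prod_range_succ]

lemma rf_pos {g : ℝ} (hg : 0 < g) (k : ℕ) : 0 < risingFactorial g k :=
  Finset.prod_pos fun i _ => by positivity

/-- Chu–Vandermonde for rising factorials. -/
lemma rf_vandermonde (a b : ℝ) (k : ℕ) :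
    ∑ ij ∈ Finset.HasAntidiagonal.antidiagonal k,
      (k.choose ij.1 : ℝ) * (risingFactorial a ij.1 * risingFactorial b ij.2)
      = risingFactorial (a + b) k := by
  induction k with
  | zero => simp [rf_zero]
  | succ n ih =>
    rw [Finset.sum_antidiagonal_choose_succ_mul
      (fun i j => risingFactorial a i * risingFactorial b j) n]
    have h1 : ∑ ij ∈ Finset.HasAntidiagonal.antidiagonal n,
        (n.choose ij.1 : ℝ) * (risingFactorial a ij.1 * risingFactorial b (ij.2 + 1))
        = ∑ ij ∈ Finset.HasAntidiagonal.antidiagonal n,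
          (n.choose ij.1 : ℝ) * (risingFactorial a ij.1 * risingFactorial b ij.2) * (b + ij.2) :=
      Finset.sum_congr rfl fun ij _ => by rw [rf_succ]; ring
    have h2 : ∑ ij ∈ Finset.HasAntidiagonal.antidiagonal n,
        (n.choose ij.2 : ℝ) * (risingFactorial a (ij.1 + 1) * risingFactorial b ij.2)
        = ∑ ij ∈ Finset.HasAntidiagonal.antidiagonal n,
          (n.choose ij.1 : ℝ) * (risingFactorial a ij.1 * risingFactorial b ij.2) * (a + ij.1) := by
      refine Finset.sum_congr rfl fun ij hij => ?_
      rw [Finset.HasAntidiagonal.mem_antidiagonal] at hij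
      rw [Nat.choose_symm_of_eq_add hij.symm, rf_succ]; ring
    rw [h1, h2, ← Finset.sum_add_distrib]
    have h3 : ∀ ij ∈ Finset.HasAntidiagonal.antidiagonal n,
        (n.choose ij.1 : ℝ) * (risingFactorial a ij.1 * risingFactorial b ij.2) * (b + ij.2)
        + (n.choose ij.1 : ℝ) * (risingFactorial a ij.1 * risingFactorial b ij.2) * (a + ij.1)
        = (n.choose ij.1 : ℝ) * (risingFactorial a ij.1 * risingFactorial b ij.2) * (a + b + n) := by
      intro ij hij
      rw [Finset.HasAntidiagonal.mem_antidiagonal] at hij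
      have : (ij.1 : ℝ) + ij.2 = n := by exact_mod_cast congrArg Nat.cast hij
      rw [← this]; ring
    rw [Finset.sum_congr rfl h3, ← Finset.sum_mul, ih, rf_succ]

lemma rf_vandermonde' (a b : ℝ) (k : ℕ) :
    ∑ ij ∈ Finset.HasAntidiagonal.antidiagonal k,
      (risingFactorial a ij.1 / ij.1.factorial) * (risingFactorial b ij.2 / ij.2.factorial)
      = risingFactorial (a + b) k / k.factorial := by
  rw [eq_div_iff (by exact_mod_cast k.factorial_ne_zero), ← rf_vandermonde, Finset.sum_mul]
  refine Finset.sum_congr rfl fun ij hij => ?_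
  rw [Finset.HasAntidiagonal.mem_antidiagonal] at hij
  have h1 : ij.1 ≤ k := le_of_add_le_left hij.le
  have h2 : k - ij.1 = ij.2 := by omega
  have h3 := Nat.choose_mul_factorial_mul_factorial h1
  rw [h2] at h3
  have h4 : (k.factorial : ℝ) = (k.choose ij.1) * ij.1.factorial * ij.2.factorial := by
    exact_mod_cast h3.symm
  rw [h4]
  have f1 : (ij.1.factorial : ℝ) ≠ 0 := by exact_mod_cast ij.1.factorial_ne_zero
  have f2 : (ij.2.factorial : ℝ) ≠ 0 := by exact_mod_cast ij.2.factorial_ne_zero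
  field_simp

lemma tuple_sum (θ : ℝ) : ∀ (N k : ℕ),
    ∑ m ∈ Finset.Nat.antidiagonalTuple N k,
      ∏ l : Fin N, risingFactorial θ (m l) / (Nat.factorial (m l) : ℝ)
      = risingFactorial (N * θ) k / k.factorial := by
  intro N
  induction N with
  | zero =>
    intro k
    match k with
    | 0 => simp [rf_zero]
    | (k+1) =>
      rw [Finset.Nat.antidiagonalTuple_zero_succ]
      have hz : risingFactorial 0 (k+1) = 0 := by
        simp [risingFactorial, Finset.prod_range_succ']
      simp [hz]
  | succ N ih =>
    intro k
    have key : ∑ m ∈ Finset.Nat.antidiagonalTuple (N+1) k,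
        ∏ l : Fin (N+1), risingFactorial θ (m l) / (Nat.factorial (m l) : ℝ)
        = ∑ p ∈ (Finset.HasAntidiagonal.antidiagonal k).sigma (fun ij => Finset.Nat.antidiagonalTuple N ij.2),
            ∏ l : Fin (N+1),
              risingFactorial θ ((Fin.cons p.1.1 p.2 : Fin (N+1) → ℕ) l) / (Nat.factorial ((Fin.cons p.1.1 p.2 : Fin (N+1) → ℕ) l) : ℝ) := by
      refine Finset.sum_nbij' (fun m => ⟨(m 0, ∑ l, Fin.tail m l), Fin.tail m⟩)
        (fun p => (Fin.cons p.1.1 p.2 : Fin (N+1) → ℕ)) ?_ ?_ ?_ ?_ ?_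
      · intro m hm
        rw [Finset.Nat.mem_antidiagonalTuple] at hm
        refine Finset.mem_sigma.mpr ⟨Finset.HasAntidiagonal.mem_antidiagonal.mpr ?_, ?_⟩
        · rw [← hm, Fin.sum_univ_succ]; rfl
        · rw [Finset.Nat.mem_antidiagonalTuple]
      · intro p hp
        rw [Finset.mem_sigma, Finset.HasAntidiagonal.mem_antidiagonal] at hp
        have h2 := Finset.Nat.mem_antidiagonalTuple.mp hp.2
        rw [Finset.Nat.mem_antidiagonalTuple]
        simp only [Fin.sum_univ_succ, Fin.cons_zero, Fin.cons_succ]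
        rw [h2, hp.1]
      · intro m hm; exact Fin.cons_self_tail m
      · intro p hp
        rw [Finset.mem_sigma, Finset.HasAntidiagonal.mem_antidiagonal] at hp
        have h2 := Finset.Nat.mem_antidiagonalTuple.mp hp.2
        refine Sigma.ext ?_ ?_
        · simp only [Fin.cons_zero, Fin.tail_cons]
          rw [h2]
        · simp only [Fin.tail_cons]
          exact heq_of_eq rfl
      · intro m hm; simp only [Fin.cons_self_tail]
    rw [key, Finset.sum_sigma]
    have step : ∀ ij ∈ Finset.HasAntidiagonal.antidiagonal k,
        (∑ m ∈ Finset.Nat.antidiagonalTuple N ij.2,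
          ∏ l : Fin (N+1),
            risingFactorial θ ((Fin.cons ij.1 m : Fin (N+1) → ℕ) l) / (Nat.factorial ((Fin.cons ij.1 m : Fin (N+1) → ℕ) l) : ℝ))
        = (risingFactorial θ ij.1 / ij.1.factorial)
            * (risingFactorial (N * θ) ij.2 / ij.2.factorial) := by
      intro ij _
      rw [← ih ij.2, Finset.mul_sum]
      refine Finset.sum_congr rfl fun m _ => ?_
      rw [Fin.prod_univ_succ]
      simp [Fin.cons_zero, Fin.cons_succ]
    rw [Finset.sum_congr rfl step, rf_vandermonde' θ (N * θ) k]
    congr 2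
    push_cast; ring


noncomputable def bc (a : ℝ) (k : ℕ) : ℝ := risingFactorial a k / k.factorial

lemma bc_pos {a : ℝ} (ha : 0 < a) (k : ℕ) : 0 < bc a k :=
  div_pos (rf_pos ha k) (by exact_mod_cast k.factorial_pos)

lemma bc_zero (a : ℝ) : bc a 0 = 1 := by simp [bc, rf_zero]

lemma bc_succ (a : ℝ) (k : ℕ) : bc a (k + 1) * (k + 1) = bc a k * (a + k) := by
  have h2 : (k.factorial : ℝ) ≠ 0 := by exact_mod_cast k.factorial_ne_zero
  have h1 : ((k+1).factorial : ℝ) = (k.factorial : ℝ) * (k + 1) := by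
    rw [Nat.factorial_succ]; push_cast; ring
  rw [bc, bc, rf_succ, h1]
  field_simp

open Filter Topology Set

lemma summable_deriv_bound {a r : ℝ} (ha : 0 < a) (hr0 : 0 < r) (hr1 : r < 1) :
    Summable (fun k : ℕ => bc a k * k * r ^ (k - 1)) := by
  set u : ℕ → ℝ := fun k => bc a k * k * r ^ (k - 1) with hu
  have hpos : ∀ k : ℕ, 1 ≤ k → 0 < u k := by
    intro k hk
    have : (0:ℝ) < k := by exact_mod_cast hk
    exact mul_pos (mul_pos (bc_pos ha k) this) (pow_pos hr0 _)
  refine summable_of_ratio_test_tendsto_lt_one hr1 ?_ ?_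
  · filter_upwards [eventually_ge_atTop 1] with k hk
    exact ne_of_gt (hpos k hk)
  · have hlim : Tendsto (fun k : ℕ => (a / k + 1) * r) atTop (𝓝 r) := by
      have := (tendsto_const_div_atTop_nhds_zero_nat a).add_const 1
      have := this.mul_const r
      simpa using this
    refine hlim.congr' ?_
    filter_upwards [eventually_ge_atTop 1] with n hn
    have hn0 : (0:ℝ) < n := by exact_mod_cast hn
    have hrw : u (n + 1) = (a / n + 1) * r * u n := by
      have h1 : u (n + 1) = bc a (n+1) * (n+1) * r ^ n := by
        simp [hu]
      have h2 : r ^ n = r ^ (n - 1) * r := by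
        conv_lhs => rw [show n = (n - 1) + 1 by omega]
        rw [pow_succ]
      rw [h1, bc_succ, h2]
      simp only [hu]
      field_simp
    have hup : u n ≠ 0 := ne_of_gt (hpos n hn)
    have hq : (0:ℝ) < a / n + 1 := by
      have : 0 ≤ a / n := le_of_lt (div_pos ha hn0)
      linarith
    rw [hrw, norm_mul, mul_div_assoc, div_self (norm_ne_zero_iff.mpr hup), mul_one,
      Real.norm_eq_abs, abs_of_pos (mul_pos hq hr0)]

lemma summable_bound {a r : ℝ} (ha : 0 < a) (hr0 : 0 < r) (hr1 : r < 1) :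
    Summable (fun k : ℕ => bc a k * r ^ k) := by
  rw [← summable_nat_add_iff 1]
  have hu := ((summable_nat_add_iff 1).mpr (summable_deriv_bound ha hr0 hr1)).mul_right r
  refine Summable.of_nonneg_of_le
    (fun k => mul_nonneg (le_of_lt (bc_pos ha _)) (pow_nonneg (le_of_lt hr0) _))
    (fun k => ?_) hu
  have h1 : bc a (k+1) * r ^ (k+1) = bc a (k+1) * 1 * r ^ k * r := by
    rw [pow_succ]; ring
  rw [h1]
  simp only [Nat.add_sub_cancel]
  push_cast
  have hb := bc_pos ha (k+1)
  have hk0 : (0:ℝ) ≤ (k:ℝ) := Nat.cast_nonneg k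
  nlinarith [mul_pos hb (mul_pos (pow_pos hr0 k) hr0)]

theorem binom_hasSum {a : ℝ} (ha : 0 < a) {x : ℝ} (hx0 : 0 ≤ x) (hx1 : x < 1) :
    HasSum (fun k : ℕ => bc a k * x ^ k) ((1 - x) ^ (-a) : ℝ) := by
  set r : ℝ := (x + 1) / 2 with hrdef
  have hxr : x < r := by rw [hrdef]; linarith
  have hr0 : 0 < r := by rw [hrdef]; linarith
  have hr1 : r < 1 := by rw [hrdef]; linarith
  set t : Set ℝ := Ioo (-r) r with htdef
  set g : ℕ → ℝ → ℝ := fun n y => bc a n * y ^ n with hgdef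
  set g' : ℕ → ℝ → ℝ := fun n y => bc a n * (n * y ^ (n - 1)) with hg'def
  set u : ℕ → ℝ := fun k => bc a k * k * r ^ (k - 1) with hudef
  have hu : Summable u := summable_deriv_bound ha hr0 hr1
  have habs : ∀ y ∈ t, |y| ≤ r := by
    intro y hy
    exact le_of_lt (abs_lt.mpr ⟨hy.1, hy.2⟩)
  have hderiv : ∀ n : ℕ, ∀ y ∈ t, HasDerivAt (g n) (g' n y) y :=
    fun n y _ => (hasDerivAt_pow n y).const_mul (bc a n)
  have hbound : ∀ n : ℕ, ∀ y ∈ t, ‖g' n y‖ ≤ u n := by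
    intro n y hy
    have h1 : ‖g' n y‖ = bc a n * n * |y| ^ (n - 1) := by
      simp only [hg'def, norm_mul, Real.norm_eq_abs, abs_of_pos (bc_pos ha n),
        abs_of_nonneg (Nat.cast_nonneg (α := ℝ) n), abs_pow]
      ring
    rw [h1, hudef]
    have hle : |y| ^ (n - 1) ≤ r ^ (n - 1) := pow_le_pow_left₀ (abs_nonneg y) (habs y hy) _
    have hb := bc_pos ha n
    exact mul_le_mul_of_nonneg_left hle (mul_nonneg (le_of_lt hb) (Nat.cast_nonneg n))
  have hg0 : Summable fun n => g n 0 := by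
    refine summable_of_ne_finset_zero (s := {0}) ?_
    intro n hn
    simp only [Finset.mem_singleton] at hn
    simp [hgdef, zero_pow hn]
  have h0t : (0:ℝ) ∈ t := ⟨by linarith, hr0⟩
  have hF : ∀ y ∈ t, HasDerivAt (fun z => ∑' n, g n z) (∑' n, g' n y) y := by
    intro y hy
    exact hasDerivAt_tsum_of_isPreconnected hu isOpen_Ioo isPreconnected_Ioo
      hderiv hbound h0t hg0 hy
  set f : ℝ → ℝ := fun z => ∑' n, g n z with hfdef
  set D : ℝ → ℝ := fun y => ∑' n, g' n y with hDdef
  have hsumg : ∀ y ∈ t, Summable (fun n => g n y) := by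
    intro y hy
    refine Summable.of_norm_bounded (summable_bound ha hr0 hr1) (fun n => ?_)
    simp only [hgdef, norm_mul, Real.norm_eq_abs, abs_of_pos (bc_pos ha n), abs_pow]
    exact mul_le_mul_of_nonneg_left (pow_le_pow_left₀ (abs_nonneg y) (habs y hy) n)
      (le_of_lt (bc_pos ha n))
  have hsumg' : ∀ y ∈ t, Summable (fun n => g' n y) :=
    fun y hy => Summable.of_norm_bounded hu (fun n => hbound n y hy)
  -- the ODE (1-y) f' = a f
  have key : ∀ y ∈ t, (1 - y) * D y = a * f y := by
    intro y hy
    have hD : HasSum (fun n => g' n y) (D y) := (hsumg' y hy).hasSum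
    have hshift : HasSum (fun n => g' (n + 1) y) (D y) :=
      (hasSum_nat_add_iff (f := fun m => g' m y) 1).mpr (by simpa [hg'def] using hD)
    have hxD : HasSum (fun n => bc a n * (n * y ^ n)) (y * D y) := by
      have hfun : (fun n : ℕ => y * g' n y) = (fun n : ℕ => bc a n * ((n : ℝ) * y ^ n)) := by
        funext n
        match n with
        | 0 => simp [hg'def]
        | (m+1) =>
          simp only [hg'def, Nat.add_sub_cancel, pow_succ]
          push_cast
          ring
      exact hfun ▸ (hD.mul_left y)
    have hsub := hshift.sub hxD
    have hterm : (fun n : ℕ => g' (n + 1) y - bc a n * ((n : ℝ) * y ^ n))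
        = fun n : ℕ => a * (bc a n * y ^ n) := by
      funext n
      simp only [hg'def, Nat.add_sub_cancel]
      push_cast
      linear_combination (y ^ n) * bc_succ a n
    rw [hterm] at hsub
    have hfa : HasSum (fun n => a * (bc a n * y ^ n)) (a * f y) :=
      ((hsumg y hy).hasSum).mul_left a
    have huniq := hsub.unique hfa
    linear_combination huniq
  -- F = (1-z)^a * f z has zero derivative on t
  have hFder : ∀ y ∈ t, HasDerivAt (fun z => (1 - z) ^ a * f z) 0 y := by
    intro y hy
    have hypos : (0:ℝ) < 1 - y := by
      have := hy.2; simp only [htdef, mem_Ioo] at hy; linarith [hy.2, hr1]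
    have h1 : HasDerivAt (fun z : ℝ => 1 - z) (-1) y := (hasDerivAt_id y).const_sub 1
    have h2 : HasDerivAt (fun z : ℝ => (1 - z) ^ a) (-1 * a * (1 - y) ^ (a - 1)) y :=
      h1.rpow_const (Or.inl (ne_of_gt hypos))
    have h3 : HasDerivAt f (D y) y := hF y hy
    have h4 := h2.mul h3
    have hpow : (1 - y) ^ (a - 1) * (1 - y) = (1 - y) ^ a := by
      rw [Real.rpow_sub hypos, Real.rpow_one]
      field_simp
    have hval : -1 * a * (1 - y) ^ (a - 1) * f y + (1 - y) ^ a * D y = 0 := by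
      rw [← hpow]
      linear_combination (1 - y) ^ (a - 1) * (key y hy)
    exact hval ▸ h4
  have hsubset : Icc (0:ℝ) x ⊆ t := by
    intro z hz
    exact ⟨by linarith [hz.1], by linarith [hz.2]⟩
  have hcont : ContinuousOn (fun z => (1 - z) ^ a * f z) (Icc 0 x) :=
    fun z hz => ((hFder z (hsubset hz)).continuousAt).continuousWithinAt
  have hconst := constant_of_has_deriv_right_zero hcont
    (fun z hz => ((hFder z (hsubset (Ico_subset_Icc_self hz))).hasDerivWithinAt)) x
    (right_mem_Icc.mpr hx0)
  -- f 0 = 1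
  have hf0 : f 0 = 1 := by
    have : ∀ n : ℕ, n ≠ 0 → g n 0 = 0 := by
      intro n hn; simp [hgdef, zero_pow hn]
    have := tsum_eq_single (L := SummationFilter.unconditional ℕ) (f := fun n => g n 0) 0 (fun n hn => this n hn)
    simp only [hfdef]
    rw [this]
    simp [hgdef, bc_zero]
  have hx1' : (0:ℝ) < 1 - x := by linarith
  have heq : (1 - x) ^ a * f x = 1 := by
    have h0 : (1 - (0:ℝ)) ^ a * f 0 = 1 := by
      rw [hf0]; simp [Real.one_rpow]
    rw [hconst]
    exact h0
  have hfx : f x = (1 - x) ^ (-a) := by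
    rw [Real.rpow_neg (le_of_lt hx1')]
    have hne : (1 - x) ^ a ≠ 0 := ne_of_gt (Real.rpow_pos_of_pos hx1' a)
    field_simp
    linarith [heq]
  have hxt : x ∈ t := ⟨by linarith, hxr⟩
  have := (hsumg x hxt).hasSum
  rw [← hfx]
  exact this


open MeasureTheory Set

lemma beta_cpow_eq {u v : ℝ} (t : ℝ) (ht : t ∈ Icc (0:ℝ) 1) :
    (t : ℂ) ^ ((u : ℂ) - 1) * ((1 : ℂ) - (t : ℂ)) ^ ((v : ℂ) - 1)
      = ((t ^ (u - 1) * (1 - t) ^ (v - 1) : ℝ) : ℂ) := by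
  have h1 : ((u : ℂ) - 1) = ((u - 1 : ℝ) : ℂ) := by push_cast; ring
  have h2 : ((v : ℂ) - 1) = ((v - 1 : ℝ) : ℂ) := by push_cast; ring
  have h3 : ((1 : ℂ) - (t : ℂ)) = ((1 - t : ℝ) : ℂ) := by push_cast; ring
  rw [h1, h2, h3, ← Complex.ofReal_cpow ht.1, ← Complex.ofReal_cpow (by linarith [ht.2]), 
    ← Complex.ofReal_mul]

lemma betaIntegrable {u v : ℝ} (hu : 0 < u) (hv : 0 < v) :
    IntegrableOn (fun t : ℝ => t ^ (u - 1) * (1 - t) ^ (v - 1)) (Ioo 0 1) volume := by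
  have hc : IntervalIntegrable
      (fun t : ℝ => (t : ℂ) ^ ((u : ℂ) - 1) * ((1 : ℂ) - (t : ℂ)) ^ ((v : ℂ) - 1))
      volume 0 1 :=
    Complex.betaIntegral_convergent (by simpa using hu) (by simpa using hv)
  rw [intervalIntegrable_iff_integrableOn_Ioc_of_le zero_le_one] at hc
  have hre : IntegrableOn
      (fun t : ℝ => ((t : ℂ) ^ ((u : ℂ) - 1) * ((1 : ℂ) - (t : ℂ)) ^ ((v : ℂ) - 1)).re)
      (Ioc 0 1) volume := hc.re
  have : IntegrableOn (fun t : ℝ => t ^ (u - 1) * (1 - t) ^ (v - 1)) (Ioc 0 1) volume := by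
    refine hre.congr_fun ?_ measurableSet_Ioc
    intro t ht
    show ((t:ℂ) ^ ((u:ℂ) - 1) * ((1:ℂ) - (t:ℂ)) ^ ((v:ℂ) - 1)).re
      = t ^ (u - 1) * (1 - t) ^ (v - 1)
    rw [beta_cpow_eq t (Ioc_subset_Icc_self ht), Complex.ofReal_re]
  exact this.mono_set Ioo_subset_Ioc_self

lemma betaIntegral_eval {u v : ℝ} (hu : 0 < u) (hv : 0 < v) :
    ∫ t in Ioo (0:ℝ) 1, t ^ (u - 1) * (1 - t) ^ (v - 1)
      = Real.Gamma u * Real.Gamma v / Real.Gamma (u + v) := by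
  have huv : 0 < u + v := by linarith
  have hG : Real.Gamma (u + v) ≠ 0 := ne_of_gt (Real.Gamma_pos_of_pos huv)
  have hcomplex : Complex.Gamma u * Complex.Gamma v
      = Complex.Gamma ((u : ℂ) + v) * Complex.betaIntegral u v :=
    Complex.Gamma_mul_Gamma_eq_betaIntegral (by simpa using hu) (by simpa using hv)
  have hbeta : Complex.betaIntegral u v
      = ((∫ t in Ioo (0:ℝ) 1, t ^ (u - 1) * (1 - t) ^ (v - 1) : ℝ) : ℂ) := by
    rw [Complex.betaIntegral]
    rw [show (∫ t in Ioo (0:ℝ) 1, t ^ (u - 1) * (1 - t) ^ (v - 1))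
      = ∫ t in (0:ℝ)..1, t ^ (u - 1) * (1 - t) ^ (v - 1) by
        rw [intervalIntegral.integral_of_le zero_le_one, integral_Ioc_eq_integral_Ioo]]
    rw [← intervalIntegral.integral_ofReal]
    refine intervalIntegral.integral_congr ?_
    intro t ht
    rw [uIcc_of_le zero_le_one] at ht
    exact beta_cpow_eq t ht
  rw [hbeta] at hcomplex
  have hcast : ((u : ℂ) + v) = ((u + v : ℝ) : ℂ) := by push_cast; ring
  rw [hcast, Complex.Gamma_ofReal, Complex.Gamma_ofReal, Complex.Gamma_ofReal] at hcomplex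
  have := hcomplex
  rw [← Complex.ofReal_mul, ← Complex.ofReal_mul] at this
  have hreal : Real.Gamma u * Real.Gamma v
      = Real.Gamma (u + v) * ∫ t in Ioo (0:ℝ) 1, t ^ (u - 1) * (1 - t) ^ (v - 1) := by
    exact_mod_cast this
  field_simp
  linarith [hreal]


section Gauss

open MeasureTheory Set

lemma Gamma_rf {x : ℝ} (hx : 0 < x) (k : ℕ) :
    Real.Gamma (x + k) = risingFactorial x k * Real.Gamma x := by
  induction k with
  | zero => simp [rf_zero]
  | succ n ih =>
    have hxn : x + n ≠ 0 := by positivity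
    have : (x + (n + 1) : ℝ) = (x + n) + 1 := by push_cast; ring
    rw [show ((n + 1 : ℕ) : ℝ) = (n : ℝ) + 1 by push_cast; ring]
    rw [show (x + ((n : ℝ) + 1)) = (x + n) + 1 by ring, Real.Gamma_add_one hxn, ih, rf_succ]
    ring

theorem gauss_hasSum {a b c : ℝ} (ha : 0 < a) (hb : 0 < b) (hc : a + b < c) :
    HasSum (fun k : ℕ => risingFactorial a k * risingFactorial b k
        / (k.factorial * risingFactorial c k))
      (Real.Gamma (c - a - b) * Real.Gamma c / (Real.Gamma (c - a) * Real.Gamma (c - b))) := by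
  have hc0 : 0 < c := by linarith
  have hcb : 0 < c - b := by linarith
  have hca : 0 < c - a := by linarith
  have hcab : 0 < c - a - b := by linarith
  set G : ℕ → ℝ → ℝ :=
    fun k t => bc a k * t ^ k * (t ^ (b - 1) * (1 - t) ^ (c - b - 1)) with hGdef
  set H : ℝ → ℝ := fun t => t ^ (b - 1) * (1 - t) ^ (c - a - b - 1) with hHdef
  -- pointwise sum of the series of integrands
  have hpoint : ∀ t ∈ Ioo (0:ℝ) 1, HasSum (fun k => G k t) (H t) := by
    intro t ht
    have h1t : (0:ℝ) < 1 - t := by linarith [ht.2]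
    have hs := (binom_hasSum ha (le_of_lt ht.1) ht.2).mul_right
      (t ^ (b - 1) * (1 - t) ^ (c - b - 1))
    have hval : (1 - t) ^ (-a) * (t ^ (b - 1) * (1 - t) ^ (c - b - 1)) = H t := by
      have hp : (1 - t) ^ (-a) * (1 - t) ^ (c - b - 1) = (1 - t) ^ (c - a - b - 1) := by
        rw [← Real.rpow_add h1t]; ring_nf
      rw [hHdef, mul_left_comm, hp]
    rw [hval] at hs
    exact hs
  have hsplit : ∀ k : ℕ, ∀ t ∈ Ioo (0:ℝ) 1,
      t ^ (b + (k:ℝ) - 1) * (1 - t) ^ (c - b - 1)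
        = t ^ k * (t ^ (b - 1) * (1 - t) ^ (c - b - 1)) := by
    intro k t ht
    rw [show b + (k:ℝ) - 1 = (k:ℝ) + (b - 1) by ring, Real.rpow_add ht.1, Real.rpow_natCast]
    ring
  have hcontG : ∀ k : ℕ, ContinuousOn (G k) (Ioo 0 1) := by
    intro k
    refine (continuousOn_const.mul (continuousOn_pow k)).mul
      ((ContinuousOn.rpow_const continuousOn_id
          (fun t ht => Or.inl (ne_of_gt ht.1))).mul
        (ContinuousOn.rpow_const (continuousOn_const.sub continuousOn_id)
          (fun t ht => Or.inl (ne_of_gt (by simp only [mem_Ioo] at ht; linarith [ht.2])))))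
  have hintG : ∀ k : ℕ, IntegrableOn (G k) (Ioo 0 1) volume := by
    intro k
    have hbk : (0:ℝ) < b + k := by positivity
    have hbase : IntegrableOn
        (fun t : ℝ => bc a k * (t ^ (b + (k:ℝ) - 1) * (1 - t) ^ (c - b - 1)))
        (Ioo 0 1) volume := (betaIntegrable hbk hcb).const_mul (bc a k)
    refine hbase.congr_fun ?_ measurableSet_Ioo
    intro t ht
    show bc a k * (t ^ (b + (k:ℝ) - 1) * (1 - t) ^ (c - b - 1)) = G k t
    rw [hsplit k t ht, hGdef]
    ring
  have hGnn : ∀ k : ℕ, ∀ t ∈ Ioo (0:ℝ) 1, 0 ≤ G k t := by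
    intro k t ht
    have h1 := (bc_pos ha k).le
    have h2 : (0:ℝ) ≤ t := ht.1.le
    have h3 : (0:ℝ) ≤ 1 - t := by linarith [ht.2]
    exact mul_nonneg (mul_nonneg h1 (pow_nonneg h2 k))
      (mul_nonneg (Real.rpow_nonneg h2 _) (Real.rpow_nonneg h3 _))
  have hHnn : ∀ t ∈ Ioo (0:ℝ) 1, 0 ≤ H t := by
    intro t ht
    exact mul_nonneg (Real.rpow_nonneg ht.1.le _)
      (Real.rpow_nonneg (by linarith [ht.2] : (0:ℝ) ≤ 1 - t) _)
  set μ : Measure ℝ := volume.restrict (Ioo (0:ℝ) 1) with hμdef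
  have hGaenn : ∀ k : ℕ, 0 ≤ᵐ[μ] G k := by
    intro k
    exact (ae_restrict_iff' measurableSet_Ioo).mpr
      (Filter.Eventually.of_forall (fun t ht => hGnn k t ht))
  have hHaenn : 0 ≤ᵐ[μ] H :=
    (ae_restrict_iff' measurableSet_Ioo).mpr
      (Filter.Eventually.of_forall (fun t ht => hHnn t ht))
  have hHint : IntegrableOn H (Ioo 0 1) volume := betaIntegrable hb hcab
  have hofReal : ∀ k : ℕ, ENNReal.ofReal (∫ t, G k t ∂μ) = ∫⁻ t, ENNReal.ofReal (G k t) ∂μ :=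
    fun k => ofReal_integral_eq_lintegral_ofReal (hintG k) (hGaenn k)
  have hGm : ∀ k : ℕ, AEMeasurable (fun t => ENNReal.ofReal (G k t)) μ :=
    fun k => ((hcontG k).aemeasurable measurableSet_Ioo).ennreal_ofReal
  have hkey : ∑' k, ENNReal.ofReal (∫ t, G k t ∂μ) = ENNReal.ofReal (∫ t, H t ∂μ) := by
    rw [tsum_congr hofReal, ← lintegral_tsum hGm,
      ofReal_integral_eq_lintegral_ofReal hHint hHaenn]
    refine lintegral_congr_ae ?_
    filter_upwards [ae_restrict_mem measurableSet_Ioo] with t ht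
    rw [← ENNReal.ofReal_tsum_of_nonneg (fun k => hGnn k t ht) (hpoint t ht).summable,
      (hpoint t ht).tsum_eq]
  have hfin : ∀ k : ℕ, ENNReal.ofReal (∫ t, G k t ∂μ) ≠ ⊤ := fun k => ENNReal.ofReal_ne_top
  have hne : ∑' k, ENNReal.ofReal (∫ t, G k t ∂μ) ≠ ⊤ := by
    rw [hkey]; exact ENNReal.ofReal_ne_top
  have hintnn : ∀ k : ℕ, 0 ≤ ∫ t, G k t ∂μ := fun k => integral_nonneg_of_ae (hGaenn k)
  have hsummable : Summable (fun k => ∫ t, G k t ∂μ) := by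
    refine (ENNReal.summable_toReal hne).congr fun k => ?_
    rw [ENNReal.toReal_ofReal (hintnn k)]
  have htsum : ∑' k, ∫ t, G k t ∂μ = ∫ t, H t ∂μ := by
    have h1 := ENNReal.tsum_toReal_eq hfin
    rw [hkey] at h1
    have h2 : ∑' k, (ENNReal.ofReal (∫ t, G k t ∂μ)).toReal = ∑' k, ∫ t, G k t ∂μ :=
      tsum_congr fun k => ENNReal.toReal_ofReal (hintnn k)
    rw [h2] at h1
    rw [← h1, ENNReal.toReal_ofReal (integral_nonneg_of_ae hHaenn)]
  have hHasSum : HasSum (fun k => ∫ t, G k t ∂μ) (∫ t, H t ∂μ) := htsum ▸ hsummable.hasSum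
  -- evaluate the integrals
  have hvalG : ∀ k : ℕ, ∫ t, G k t ∂μ
      = bc a k * (Real.Gamma (b + k) * Real.Gamma (c - b) / Real.Gamma (c + k)) := by
    intro k
    have hbk : (0:ℝ) < b + k := by positivity
    have h1 : ∫ t, G k t ∂μ
        = ∫ t in Ioo (0:ℝ) 1, bc a k * (t ^ (b + (k:ℝ) - 1) * (1 - t) ^ (c - b - 1)) := by
      refine setIntegral_congr_fun measurableSet_Ioo ?_
      intro t ht
      show G k t = bc a k * (t ^ (b + (k:ℝ) - 1) * (1 - t) ^ (c - b - 1))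
      rw [hsplit k t ht, hGdef]
      ring
    rw [h1, integral_const_mul, betaIntegral_eval hbk hcb,
      show b + (k:ℝ) + (c - b) = c + k by ring]
  have hvalH : ∫ t, H t ∂μ = Real.Gamma b * Real.Gamma (c - a - b) / Real.Gamma (c - a) := by
    have := betaIntegral_eval hb hcab
    rw [show b + (c - a - b) = c - a by ring] at this
    exact this
  -- put everything together
  have hΓb := Real.Gamma_pos_of_pos hb
  have hΓc := Real.Gamma_pos_of_pos hc0
  have hΓcb := Real.Gamma_pos_of_pos hcb
  have hΓca := Real.Gamma_pos_of_pos hca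
  set K : ℝ := Real.Gamma c / (Real.Gamma b * Real.Gamma (c - b)) with hKdef
  have hfinal := hHasSum.mul_left K
  have hfun : (fun k => K * ∫ t, G k t ∂μ)
      = fun k : ℕ => risingFactorial a k * risingFactorial b k
          / (k.factorial * risingFactorial c k) := by
    funext k
    rw [hvalG k, hKdef]
    have hΓbk : Real.Gamma (b + k) = risingFactorial b k * Real.Gamma b := Gamma_rf hb k
    have hΓck : Real.Gamma (c + k) = risingFactorial c k * Real.Gamma c := Gamma_rf hc0 k
    have hrfck : 0 < risingFactorial c k := rf_pos hc0 k
    have hfact : (0:ℝ) < k.factorial := by exact_mod_cast k.factorial_pos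
    rw [hΓbk, hΓck, bc]
    field_simp
  have hval : K * ∫ t, H t ∂μ
      = Real.Gamma (c - a - b) * Real.Gamma c / (Real.Gamma (c - a) * Real.Gamma (c - b)) := by
    rw [hvalH, hKdef]
    field_simp
  rw [hfun, hval] at hfinal
  exact hfinal

end Gauss


/-- for `θ, A > 0`, `N ≥ 1` and `y > Nθ + A`, the series
`F^{(N)}_{A,θ}(y) = ∑ₖ q^{(N)}_{A,θ}(k)/y^{↑k}` converges, with sum
`Γ(y-A-Nθ)Γ(y)/(Γ(y-A)Γ(y-Nθ))`. -/
theorem qCoef_hasSum (θ A : ℝ) (hθ : 0 < θ) (hA : 0 < A) (N : ℕ) (hN : 1 ≤ N)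
    (y : ℝ) (hy : N * θ + A < y) :
    HasSum (fun k : ℕ => qCoef A θ N k / risingFactorial y k)
      (Real.Gamma (y - A - N * θ) * Real.Gamma y /
        (Real.Gamma (y - A) * Real.Gamma (y - N * θ))) := by
  have hy0 : (0:ℝ) < y := by
    have h1 : (1:ℝ) ≤ N := by exact_mod_cast hN
    nlinarith
  have hNθ : 0 < (N:ℝ) * θ := by
    have h1 : (1:ℝ) ≤ N := by exact_mod_cast hN
    nlinarith
  have hc : A + (N:ℝ) * θ < y := by linarith
  have hg := gauss_hasSum hA hNθ hc
  have hfun : (fun k : ℕ => risingFactorial A k * risingFactorial ((N:ℝ) * θ) k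
      / (k.factorial * risingFactorial y k))
      = fun k : ℕ => qCoef A θ N k / risingFactorial y k := by
    funext k
    rw [qCoef, tuple_sum θ N k]
    have hyk : risingFactorial y k ≠ 0 := ne_of_gt (rf_pos hy0 k)
    have hfact : (k.factorial : ℝ) ≠ 0 := by exact_mod_cast k.factorial_ne_zero
    field_simp
  rw [hfun] at hg
  exact hg
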